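/- Let (A, φ) be a noncommutative probability space and let A_1, ..., A_k be unital subalgebras of A which are free in (A, φ). Let F' denote the set of all linear functionals φ' : A → ℂ such that φ'(1) = 0 and A_1, ..., A_k are infinitesimally free in (A, φ, φ'). Then: (1) F' is a linear subspace of the dual space of A (it contains the zero functional and is closed under addition and multiplication by complex scalars); (2) if in addition A is generated as a unital algebra by A_1 ∪ ⋯ ∪ A_k, then the map from F' to the product of the duals of A_1, ..., A_k sending φ' to (φ'|A_1, ..., φ'|A_k) is injective. -/

import Mathlib

namespace InfFree

open scoped BigOperators

/-- `π` is a partition of `Fin n` into nonempty blocks. -/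
def IsPartition {n : ℕ} (π : Finset (Finset (Fin n))) : Prop :=
  (∀ V ∈ π, V.Nonempty) ∧ ∀ i : Fin n, ∃! V : Finset (Fin n), V ∈ π ∧ i ∈ V

/-- `π` is non-crossing: there are no `p < q < r < s` with `p, r` in one block and
`q, s` in another block. -/
def IsNonCrossing {n : ℕ} (π : Finset (Finset (Fin n))) : Prop :=
  ∀ p q r s : Fin n, p < q → q < r → r < s →
    ∀ V ∈ π, ∀ W ∈ π, p ∈ V → r ∈ V → q ∈ W → s ∈ W → V = W

open Classical in
/-- The finset `NC n` of non-crossing partitions of `Fin n`. -/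
noncomputable def NC (n : ℕ) : Finset (Finset (Finset (Fin n))) :=
  Finset.univ.filter fun π => IsPartition π ∧ IsNonCrossing π

/-- Restriction of an `n`-tuple to a subset `V ⊆ Fin n`, listed in increasing order. -/
def restrict {α : Type*} {n : ℕ} (a : Fin n → α) (V : Finset (Fin n)) :
    Fin V.card → α :=
  fun i => a (V.orderIsoOfFin rfl i).1

/-- `κ` is the family of `R`-valued non-crossing cumulant functionals of `φ`, i.e.
the moment-cumulant formulas hold. -/
def MomentCumulant {A : Type*} [Ring A] {R : Type*} [CommRing R]
    (φ : A → R) (κ : ∀ n : ℕ, (Fin n → A) → R) : Prop :=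
  ∀ (n : ℕ), 1 ≤ n → ∀ a : Fin n → A,
    φ (List.ofFn a).prod = ∑ π ∈ NC n, ∏ V ∈ π, κ V.card (restrict a V)

/-- `κ'` is the family of infinitesimal non-crossing cumulant functionals of
`(φ, φ')`, where `κ` is the family of non-crossing cumulant functionals of `φ`. -/
def InfMomentCumulant {A : Type*} [Ring A]
    (φ' : A → ℂ) (κ κ' : ∀ n : ℕ, (Fin n → A) → ℂ) : Prop :=
  ∀ (n : ℕ), 1 ≤ n → ∀ a : Fin n → A,
    φ' (List.ofFn a).prod =
      ∑ π ∈ NC n, ∑ V ∈ π,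
        κ' V.card (restrict a V) * ∏ W ∈ π.erase V, κ W.card (restrict a W)

/-- Consecutive indices are distinct. -/
def Alternating {n k : ℕ} (i : Fin n → Fin k) : Prop :=
  ∀ (m : ℕ) (h : m + 1 < n), i ⟨m, Nat.lt_of_succ_lt h⟩ ≠ i ⟨m + 1, h⟩

/-- Freeness of the family of subsets `S` with respect to `φ`. -/
def FreeSets {A : Type*} [Ring A] {k : ℕ} (φ : A → ℂ) (S : Fin k → Set A) : Prop :=
  ∀ (n : ℕ), 1 ≤ n → ∀ i : Fin n → Fin k, Alternating i →
    ∀ a : Fin n → A, (∀ m, a m ∈ S (i m)) → (∀ m, φ (a m) = 0) →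
      φ (List.ofFn a).prod = 0

/-- Infinitesimal freeness of the family of subsets `S` with respect to `(φ, φ')`. -/
def InfFreeSets {A : Type*} [Ring A] {k : ℕ} (φ φ' : A → ℂ) (S : Fin k → Set A) : Prop :=
  ∀ (n : ℕ) (hn : 1 ≤ n) (i : Fin n → Fin k), Alternating i →
    ∀ a : Fin n → A, (∀ m, a m ∈ S (i m)) → (∀ m, φ (a m) = 0) →
      φ (List.ofFn a).prod = 0 ∧
      ((Odd n ∧ ∀ m : Fin n, i m = i m.rev) →
        φ' (List.ofFn a).prod =
          (∏ j : Fin ((n - 1) / 2),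
              φ (a ⟨j, by have := j.isLt; omega⟩ *
                 a ⟨n - 1 - j, by have := j.isLt; omega⟩)) *
            φ' (a ⟨n / 2, by omega⟩)) ∧
      (¬(Odd n ∧ ∀ m : Fin n, i m = i m.rev) → φ' (List.ofFn a).prod = 0)

section Aux

variable {A : Type*} [Ring A] [Algebra ℂ A] {k : ℕ}
variable (φ : A →ₗ[ℂ] ℂ) (Alg : Fin k → Subalgebra ℂ A)

def GoodList (l : List (A × Fin k)) : Prop :=
  (l.map Prod.snd).Chain' (· ≠ ·) ∧ ∀ p ∈ l, p.1 ∈ Alg p.2 ∧ φ p.1 = 0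

noncomputable def Mspan : Submodule ℂ A :=
  Submodule.span ℂ (insert 1 {x | ∃ l, GoodList φ Alg l ∧ l ≠ [] ∧ x = (l.map Prod.fst).prod})

lemma goodList_prod_mem {l : List (A × Fin k)} (hl : GoodList φ Alg l) :
    (l.map Prod.fst).prod ∈ Mspan φ Alg := by
  rcases eq_or_ne l [] with rfl | hne
  · have h1 : (1 : A) ∈ Mspan φ Alg := Submodule.subset_span (Set.mem_insert 1 _)
    simpa using h1
  · exact Submodule.subset_span (Set.mem_insert_of_mem _ ⟨l, hl, hne, rfl⟩)

lemma goodList_mul_mem (hφ1 : φ 1 = 1) :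
    ∀ (N : ℕ) (l m : List (A × Fin k)), l.length + m.length ≤ N →
      GoodList φ Alg l → GoodList φ Alg m →
      (l.map Prod.fst).prod * (m.map Prod.fst).prod ∈ Mspan φ Alg := by
  intro N
  induction N with
  | zero =>
    intro l m hlen hl hm
    have hl0 : l = [] := List.eq_nil_of_length_eq_zero (by omega)
    have hm0 : m = [] := List.eq_nil_of_length_eq_zero (by omega)
    subst hl0; subst hm0
    simpa using goodList_prod_mem φ Alg hl
  | succ N ih =>
    intro l m hlen hl hm
    rcases eq_or_ne l [] with rfl | hlne
    · simpa using goodList_prod_mem φ Alg hm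
    rcases eq_or_ne m [] with rfl | hmne
    · simpa using goodList_prod_mem φ Alg hl
    obtain ⟨l₀, p, hl'⟩ := List.eq_nil_or_concat l |>.resolve_left hlne
    rw [List.concat_eq_append] at hl'
    subst hl'
    obtain ⟨q, m₀, rfl⟩ := List.exists_cons_of_ne_nil hmne
    obtain ⟨hlc, hlmem⟩ := hl
    obtain ⟨hmc, hmmem⟩ := hm
    have hlc' : (l₀.map Prod.snd ++ [p.2]).Chain' (· ≠ ·) := by simpa using hlc
    have hmc' : (q.2 :: m₀.map Prod.snd).Chain' (· ≠ ·) := by simpa using hmc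
    have h1' : (l₀.map Prod.snd).Chain' (· ≠ ·) := (List.isChain_append.mp hlc').1
    have hrel : ∀ x ∈ (l₀.map Prod.snd).getLast?, x ≠ p.2 := by
      intro x hx
      exact (List.isChain_append.mp hlc').2.2 x hx p.2 (by simp)
    have hm₀c : (m₀.map Prod.snd).Chain' (· ≠ ·) := (List.isChain_cons.mp hmc').2
    have hqhead : ∀ y ∈ (m₀.map Prod.snd).head?, q.2 ≠ y := (List.isChain_cons.mp hmc').1
    have hl₀ : GoodList φ Alg l₀ := ⟨h1', fun x hx => hlmem x (by simp [hx])⟩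
    have hm₀ : GoodList φ Alg m₀ := ⟨hm₀c, fun x hx => hmmem x (by simp [hx])⟩
    set L0 : A := (l₀.map Prod.fst).prod with hL0
    set M0 : A := (m₀.map Prod.fst).prod with hM0
    have hlprod : ((l₀ ++ [p]).map Prod.fst).prod = L0 * p.1 := by simp [hL0]
    have hmprod : ((q :: m₀).map Prod.fst).prod = q.1 * M0 := by simp [hM0]
    rw [hlprod, hmprod]
    by_cases hpq : p.2 = q.2
    · set r : ℂ := φ (p.1 * q.1) with hr
      set c : A := p.1 * q.1 - r • 1 with hc
      have hcmem : c ∈ Alg p.2 := by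
        apply sub_mem
        · exact mul_mem (hlmem p (by simp)).1 (hpq ▸ (hmmem q (by simp)).1)
        · exact Subalgebra.smul_mem _ (one_mem _) r
      have hcφ : φ c = 0 := by simp [hc, hr, map_sub, map_smul, hφ1]
      set L : List (A × Fin k) := l₀ ++ (c, p.2) :: m₀ with hL
      have hLgood : GoodList φ Alg L := by
        constructor
        · have h2 : (p.2 :: m₀.map Prod.snd).Chain' (· ≠ ·) :=
            List.isChain_cons.mpr ⟨by rw [hpq]; exact hqhead, hm₀c⟩
          have : (l₀.map Prod.snd ++ p.2 :: m₀.map Prod.snd).Chain' (· ≠ ·) := by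
            refine List.isChain_append.mpr ⟨h1', h2, ?_⟩
            intro x hx y hy
            rw [List.head?_cons] at hy
            cases hy
            exact hrel x hx
          simpa [hL] using this
        · intro x hx
          simp only [hL, List.mem_append, List.mem_cons] at hx
          rcases hx with hx | rfl | hx
          · exact hlmem x (by simp [hx])
          · exact ⟨hcmem, hcφ⟩
          · exact hmmem x (by simp [hx])
      have hLprod : (L.map Prod.fst).prod = L0 * c * M0 := by simp [hL, mul_assoc, hL0, hM0]
      have key : L0 * p.1 * (q.1 * M0) = L0 * c * M0 + r • (L0 * M0) := by
        simp [hc, mul_sub, sub_mul, mul_smul_comm, smul_mul_assoc, mul_assoc]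
      rw [key]
      refine add_mem ?_ (Submodule.smul_mem _ _ ?_)
      · rw [← hLprod]; exact goodList_prod_mem φ Alg hLgood
      · exact ih l₀ m₀ (by simp at hlen ⊢; omega) hl₀ hm₀
    · have hgood : GoodList φ Alg ((l₀ ++ [p]) ++ q :: m₀) := by
        constructor
        · rw [List.map_append]
          refine List.isChain_append.mpr ⟨hlc, hmc, ?_⟩
          intro x hx y hy
          have hx' : x = p.2 := by
            have h2 : ((l₀ ++ [p]).map Prod.snd).getLast? = some p.2 := by simp
            rw [h2] at hx
            exact (Option.some_inj.mp hx).symm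
          have hy' : y = q.2 := by
            simp only [List.map_cons, List.head?_cons, Option.mem_def,
              Option.some_inj] at hy
            exact hy.symm
          rw [hx', hy']; exact hpq
        · intro x hx
          rcases List.mem_append.mp hx with hx | hx
          · exact hlmem x hx
          · exact hmmem x hx
      have := goodList_prod_mem φ Alg hgood
      rw [List.map_append, List.prod_append, hlprod, hmprod] at this
      exact this

lemma mem_alg_mem_Mspan (hφ1 : φ 1 = 1) {i : Fin k} {a : A} (ha : a ∈ Alg i) :
    a ∈ Mspan φ Alg := by
  have h1 : (1 : A) ∈ Mspan φ Alg := Submodule.subset_span (Set.mem_insert 1 _)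
  have hc : a - φ a • 1 ∈ Mspan φ Alg := by
    have : GoodList φ Alg [(a - φ a • 1, i)] := by
      refine ⟨List.isChain_singleton _, ?_⟩
      intro p hp
      simp only [List.mem_singleton] at hp
      subst hp
      exact ⟨sub_mem ha (Subalgebra.smul_mem _ (one_mem _) _),
        by simp [map_sub, map_smul, hφ1]⟩
    simpa using goodList_prod_mem φ Alg this
  have := add_mem hc (Submodule.smul_mem _ (φ a) h1)
  simpa using this

lemma mul_mem_Mspan (hφ1 : φ 1 = 1) {x y : A}
    (hx : x ∈ Mspan φ Alg) (hy : y ∈ Mspan φ Alg) : x * y ∈ Mspan φ Alg := by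
  have hgen : ∀ z ∈ (insert 1 {x | ∃ l, GoodList φ Alg l ∧ l ≠ [] ∧
      x = (l.map Prod.fst).prod} : Set A), ∃ l, GoodList φ Alg l ∧ z = (l.map Prod.fst).prod := by
    rintro z (rfl | ⟨l, hl, -, rfl⟩)
    · exact ⟨[], ⟨List.isChain_nil, by simp⟩, by simp⟩
    · exact ⟨l, hl, rfl⟩
  induction hx using Submodule.span_induction generalizing y with
  | mem x hxg =>
    induction hy using Submodule.span_induction with
    | mem y hyg =>
      obtain ⟨l, hl, rfl⟩ := hgen x hxg
      obtain ⟨m, hm, rfl⟩ := hgen y hyg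
      exact goodList_mul_mem φ Alg hφ1 (l.length + m.length) l m le_rfl hl hm
    | zero => simpa using Submodule.zero_mem _
    | add y z _ _ hy hz => rw [mul_add]; exact add_mem hy hz
    | smul c y _ hy => rw [mul_smul_comm]; exact Submodule.smul_mem _ _ hy
  | zero => simpa using Submodule.zero_mem _
  | add x z _ _ hx hz => rw [add_mul]; exact add_mem (hx hy) (hz hy)
  | smul c x _ hx => rw [smul_mul_assoc]; exact Submodule.smul_mem _ _ (hx hy)

lemma Mspan_eq_top (hφ1 : φ 1 = 1)
    (hgen : Algebra.adjoin ℂ (⋃ i, (Alg i : Set A)) = ⊤) :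
    Mspan φ Alg = ⊤ := by
  have h1 : (1 : A) ∈ Mspan φ Alg := Submodule.subset_span (Set.mem_insert 1 _)
  let S : Subalgebra ℂ A :=
    { carrier := Mspan φ Alg
      one_mem' := h1
      zero_mem' := zero_mem _
      add_mem' := fun ha hb => add_mem ha hb
      mul_mem' := fun ha hb => mul_mem_Mspan φ Alg hφ1 ha hb
      algebraMap_mem' := fun r => by
        have := Submodule.smul_mem (Mspan φ Alg) r h1
        simpa [Algebra.algebraMap_eq_smul_one] using this }
  have hle : Algebra.adjoin ℂ (⋃ i, (Alg i : Set A)) ≤ S := by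
    apply Algebra.adjoin_le
    rintro x hx
    simp only [Set.mem_iUnion] at hx
    obtain ⟨i, hi⟩ := hx
    exact mem_alg_mem_Mspan φ Alg hφ1 hi
  rw [hgen] at hle
  rw [eq_top_iff]
  intro x _
  exact hle Algebra.mem_top

end Aux

lemma eq_on_goodList {A : Type*} [Ring A] [Algebra ℂ A] {k : ℕ}
    (φ : A →ₗ[ℂ] ℂ) (Alg : Fin k → Subalgebra ℂ A) (f g : A →ₗ[ℂ] ℂ)
    (hf : InfFreeSets (⇑φ) (⇑f) (fun i => (Alg i : Set A)))
    (hg : InfFreeSets (⇑φ) (⇑g) (fun i => (Alg i : Set A)))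
    (hrestr : ∀ i : Fin k, ∀ a ∈ Alg i, f a = g a)
    {l : List (A × Fin k)} (hl : GoodList φ Alg l) (hne : l ≠ []) :
    f (l.map Prod.fst).prod = g (l.map Prod.fst).prod := by
  set n := l.length with hn'
  set a : Fin n → A := fun m => (l.get m).1 with ha
  set i : Fin n → Fin k := fun m => (l.get m).2 with hi
  have hn : 1 ≤ n := List.length_pos_iff.mpr hne
  have hofn : List.ofFn a = l.map Prod.fst := by
    conv_rhs => rw [← List.ofFn_get l]
    rw [List.map_ofFn]
    rfl
  have halt : Alternating i := by
    intro m h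
    have hch := List.isChain_iff_getElem.mp hl.1 m (by simp only [List.length_map]; omega)
    simpa [hi] using hch
  have hmem : ∀ m, a m ∈ (fun j => (Alg j : Set A)) (i m) := by
    intro m
    exact (hl.2 _ (l.get_mem m)).1
  have hcent : ∀ m, φ (a m) = 0 := by
    intro m
    exact (hl.2 _ (l.get_mem m)).2
  obtain ⟨-, hfo, hfe⟩ := hf n hn i halt a hmem hcent
  obtain ⟨-, hgo, hge⟩ := hg n hn i halt a hmem hcent
  rw [← hofn]
  by_cases hcond : Odd n ∧ ∀ m : Fin n, i m = i m.rev
  · rw [hfo hcond, hgo hcond, hrestr (i ⟨n / 2, by omega⟩) _ (hmem _)]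
  · rw [hfe hcond, hge hcond]

/-- The set of soul companions for `φ` with respect to the subalgebras `Alg i`. -/
def soulCompanions {A : Type*} [Ring A] [Algebra ℂ A]
    (φ : A → ℂ) {k : ℕ} (Alg : Fin k → Subalgebra ℂ A) : Set (A →ₗ[ℂ] ℂ) :=
  {ψ | ψ 1 = 0 ∧ InfFreeSets φ (⇑ψ) (fun i => (Alg i : Set A))}

/-- (1) The set of soul companions of `φ` is a linear subspace of
the dual of `A`; (2) if `A` is generated by `A_1 ∪ ⋯ ∪ A_k`, then a soul companion
is determined by its restrictions to `A_1, …, A_k`. -/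
theorem soulCompanions_subspace_and_injective_restriction
    {A : Type*} [Ring A] [Algebra ℂ A]
    (φ : A →ₗ[ℂ] ℂ) (hφ1 : φ 1 = 1)
    {k : ℕ} (Alg : Fin k → Subalgebra ℂ A)
    (hfree : FreeSets (⇑φ) (fun i => (Alg i : Set A))) :
    ((0 : A →ₗ[ℂ] ℂ) ∈ soulCompanions (⇑φ) Alg ∧
      (∀ f ∈ soulCompanions (⇑φ) Alg, ∀ g ∈ soulCompanions (⇑φ) Alg,
        f + g ∈ soulCompanions (⇑φ) Alg) ∧
      (∀ (c : ℂ), ∀ f ∈ soulCompanions (⇑φ) Alg,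
        c • f ∈ soulCompanions (⇑φ) Alg)) ∧
    (Algebra.adjoin ℂ (⋃ i, (Alg i : Set A)) = ⊤ →
      ∀ f ∈ soulCompanions (⇑φ) Alg, ∀ g ∈ soulCompanions (⇑φ) Alg,
        (∀ i : Fin k, ∀ a ∈ Alg i, f a = g a) → f = g) := by
  constructor
  · refine ⟨⟨rfl, ?_⟩, ?_, ?_⟩
    · intro n hn i hi a hmem hcent
      refine ⟨hfree n hn i hi a hmem hcent, fun h => by simp, fun h => by simp⟩
    · rintro f ⟨hf1, hf⟩ g ⟨hg1, hg⟩
      refine ⟨by simp [hf1, hg1], ?_⟩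
      intro n hn i hi a hmem hcent
      obtain ⟨hz, hfo, hfe⟩ := hf n hn i hi a hmem hcent
      obtain ⟨-, hgo, hge⟩ := hg n hn i hi a hmem hcent
      refine ⟨hz, fun h => ?_, fun h => ?_⟩
      · simp only [LinearMap.add_apply, hfo h, hgo h, mul_add]
      · simp only [LinearMap.add_apply, hfe h, hge h, add_zero]
    · rintro c f ⟨hf1, hf⟩
      refine ⟨by simp [hf1], ?_⟩
      intro n hn i hi a hmem hcent
      obtain ⟨hz, hfo, hfe⟩ := hf n hn i hi a hmem hcent
      refine ⟨hz, fun h => ?_, fun h => ?_⟩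
      · simp only [LinearMap.smul_apply, hfo h, smul_eq_mul]
        ring
      · simp only [LinearMap.smul_apply, hfe h, smul_eq_mul, mul_zero]
  · rintro hgen f ⟨hf1, hf⟩ g ⟨hg1, hg⟩ hrestr
    have htop := Mspan_eq_top φ Alg hφ1 hgen
    ext x
    have hx : x ∈ Submodule.span ℂ (insert 1 {x | ∃ l, GoodList φ Alg l ∧ l ≠ [] ∧
        x = (l.map Prod.fst).prod}) := by
      have : x ∈ Mspan φ Alg := htop ▸ Submodule.mem_top
      exact this
    induction hx using Submodule.span_induction with
    | mem y hy =>
      rcases hy with rfl | ⟨l, hl, hne, rfl⟩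
      · rw [hf1, hg1]
      · exact eq_on_goodList φ Alg f g hf hg hrestr hl hne
    | zero => simp
    | add y z _ _ hy hz => simp [map_add, hy, hz]
    | smul c y _ hy => simp [map_smul, hy]


end InfFree
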